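/- Let B be a symmetric positive definite N×N real matrix, μ̂ ∈ ℝ^N, v > 0, and b_1, …, b_N ∈ ℝ^N. Let T ≥ 1 and N ≥ 1 be integers with T·N ≥ 2. Let ξ be a random vector in ℝ^N whose law is the N-fold product of gaussianReal 0 1, and set μ̃ := μ̂ + v B^{−1/2} ξ. Then with probability at least 1 − 1/T², simultaneously for all i ∈ {1,…,N}: |b_iᵀμ̃ − b_iᵀμ̂| ≤ v ‖b_i‖_{B^{−1}} √(4 ln(TN)). -/

import Mathlib

set_option autoImplicit false

open MeasureTheory ProbabilityTheory Matrix



open Real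
open scoped ENNReal NNReal


lemma lintegral_pi_prod (μ : Measure ℝ) [IsProbabilityMeasure μ] :
    ∀ (n : ℕ) (f : Fin n → ℝ → ℝ≥0∞), (∀ i, Measurable (f i)) →
      ∫⁻ x : Fin n → ℝ, ∏ i, f i (x i) ∂Measure.pi (fun _ => μ) = ∏ i, ∫⁻ t, f i t ∂μ := by
  intro n
  induction n with
  | zero => intro f hf; simp
  | succ n ih =>
    intro f hf
    have mp := measurePreserving_piFinSuccAbove (fun _ : Fin (n + 1) => μ) 0
    have hg : Measurable fun p : ℝ × (Fin n → ℝ) => f 0 p.1 * ∏ j : Fin n, f j.succ (p.2 j) :=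
      ((hf 0).comp measurable_fst).mul
        (Finset.measurable_prod _ fun j _ =>
          (hf j.succ).comp ((measurable_pi_apply j).comp measurable_snd))
    calc ∫⁻ x : Fin (n + 1) → ℝ, ∏ i, f i (x i) ∂Measure.pi (fun _ => μ)
        = ∫⁻ x : Fin (n + 1) → ℝ,
            (fun p : ℝ × (Fin n → ℝ) => f 0 p.1 * ∏ j : Fin n, f j.succ (p.2 j))
              (MeasurableEquiv.piFinSuccAbove (fun _ => ℝ) 0 x) ∂Measure.pi (fun _ => μ) := by
          congr 1
          ext x
          simp [MeasurableEquiv.piFinSuccAbove, Fin.prod_univ_succ, Fin.zero_succAbove,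
            Fin.tail]
      _ = ∫⁻ p : ℝ × (Fin n → ℝ), f 0 p.1 * (fun y : Fin n → ℝ => ∏ j : Fin n, f j.succ (y j)) p.2
            ∂(μ.prod (Measure.pi fun _ : Fin n => μ)) := mp.lintegral_comp hg
      _ = (∫⁻ t, f 0 t ∂μ) * ∏ j : Fin n, ∫⁻ t, f j.succ t ∂μ := by
          have hgm : Measurable fun y : Fin n → ℝ => ∏ j : Fin n, f j.succ (y j) :=
            Finset.measurable_prod _ fun j _ => (hf j.succ).comp (measurable_pi_apply j)
          rw [lintegral_prod_mul (f := f 0) (g := fun y : Fin n → ℝ => ∏ j : Fin n, f j.succ (y j))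
            (hf 0).aemeasurable hgm.aemeasurable]
          rw [ih _ fun j => hf j.succ]
      _ = ∏ i, ∫⁻ t, f i t ∂μ := (Fin.prod_univ_succ fun i => ∫⁻ t, f i t ∂μ).symm



lemma gauss_shift (a : ℝ) :
    gaussianReal a 1 = (gaussianReal 0 1).withDensity
      (fun t => ENNReal.ofReal (rexp (a * t - a ^ 2 / 2))) := by
  rw [gaussianReal_of_var_ne_zero _ one_ne_zero, gaussianReal_of_var_ne_zero _ one_ne_zero,
    ← withDensity_mul _ (measurable_gaussianPDF _ _) (by fun_prop)]
  congr 1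
  ext t
  show gaussianPDF a 1 t = gaussianPDF 0 1 t * ENNReal.ofReal (rexp (a * t - a ^ 2 / 2))
  rw [gaussianPDF, gaussianPDF, ← ENNReal.ofReal_mul (gaussianPDFReal_nonneg _ _ _)]
  congr 1
  simp only [gaussianPDFReal, NNReal.coe_one, mul_one, sub_zero, mul_assoc, ← Real.exp_add]
  congr 1
  ring


lemma pi_gauss {n : ℕ} (a : Fin n → ℝ) :
    Measure.pi (fun i => gaussianReal (a i) 1) =
      (Measure.pi fun _ : Fin n => gaussianReal 0 1).withDensity
        (fun x => ENNReal.ofReal (rexp (∑ i, (a i * x i - a i ^ 2 / 2)))) := by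
  refine Measure.pi_eq fun s hs => ?_
  rw [withDensity_apply _ (MeasurableSet.univ_pi hs),
    ← lintegral_indicator (MeasurableSet.univ_pi hs)]
  have hind : (Set.univ.pi s).indicator
        (fun x : Fin n → ℝ => ENNReal.ofReal (rexp (∑ i, (a i * x i - a i ^ 2 / 2)))) =
      fun x => ∏ i, (s i).indicator
        (fun t => ENNReal.ofReal (rexp (a i * t - a i ^ 2 / 2))) (x i) := by
    ext x
    by_cases hx : x ∈ Set.univ.pi s
    · rw [Set.indicator_of_mem hx, Real.exp_sum,
        ENNReal.ofReal_prod_of_nonneg (fun i _ => (Real.exp_nonneg _))]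
      exact Finset.prod_congr rfl fun i _ => by
        rw [Set.indicator_of_mem (hx i (Set.mem_univ i))]
    · rw [Set.indicator_of_notMem hx]
      rw [Set.mem_univ_pi] at hx
      push_neg at hx
      obtain ⟨i, hi⟩ := hx
      exact (Finset.prod_eq_zero (Finset.mem_univ i) (Set.indicator_of_notMem hi _)).symm
  rw [hind, lintegral_pi_prod _ _ _
    (fun i => Measurable.indicator (by fun_prop) (hs i))]
  refine Finset.prod_congr rfl fun i _ => ?_
  rw [lintegral_indicator (hs i), ← withDensity_apply _ (hs i), ← gauss_shift]


lemma map_add_pi {n : ℕ} (h : Fin n → ℝ) :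
    Measure.map (fun x => x + h) (Measure.pi fun _ : Fin n => gaussianReal 0 1) =
      Measure.pi (fun i => gaussianReal (h i) 1) := by
  have hmp := measurePreserving_pi (fun _ : Fin n => gaussianReal 0 1)
      (fun i => gaussianReal (h i) 1) (f := fun i t => t + h i)
      (fun i => ⟨measurable_add_const _, by
        simpa using gaussianReal_map_add_const (μ := 0) (v := 1) (h i)⟩)
  exact hmp.map_eq

lemma map_neg_pi {n : ℕ} :
    Measure.map (fun x : Fin n → ℝ => -x) (Measure.pi fun _ : Fin n => gaussianReal 0 1) =
      Measure.pi (fun _ : Fin n => gaussianReal 0 1) := by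
  have h1 : ((-1 : ℝ) * ·) = (Neg.neg : ℝ → ℝ) := funext fun t => neg_one_mul t
  have h2 : (⟨(-1 : ℝ) ^ 2, sq_nonneg _⟩ : ℝ≥0) = 1 := by ext; norm_num
  have hone : Measure.map (Neg.neg : ℝ → ℝ) (gaussianReal 0 1) = gaussianReal 0 1 := by
    have := gaussianReal_map_const_mul (μ := 0) (v := 1) (-1)
    rw [h1] at this
    simpa [h2] using this
  have hmp := measurePreserving_pi (fun _ : Fin n => gaussianReal 0 1)
      (fun _ : Fin n => gaussianReal 0 1) (f := fun _ t => -t)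
      (fun i => ⟨measurable_neg, hone⟩)
  exact hmp.map_eq

lemma measurable_dot {n : ℕ} (c : Fin n → ℝ) : Measurable fun x : Fin n → ℝ => c ⬝ᵥ x :=
  Finset.measurable_sum _ fun i _ => (measurable_pi_apply i).const_mul _

lemma gauss_tail_one_sided {n : ℕ} (c : Fin n → ℝ) (hc : c ≠ 0) {s : ℝ} (hs : 0 ≤ s) :
    (Measure.pi fun _ : Fin n => gaussianReal 0 1) {x | Real.sqrt (c ⬝ᵥ c) * s < c ⬝ᵥ x} ≤
      ENNReal.ofReal (rexp (-(s ^ 2) / 2)) *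
        (Measure.pi fun _ : Fin n => gaussianReal 0 1) {x | 0 < c ⬝ᵥ x} := by
  set γn := (Measure.pi fun _ : Fin n => gaussianReal 0 1) with hγn
  set nc := Real.sqrt (c ⬝ᵥ c) with hncdef
  have hcc : 0 < c ⬝ᵥ c := by
    rcases lt_or_eq_of_le (Finset.sum_nonneg fun i _ => mul_self_nonneg (c i)) with h | h
    · exact h
    · exact absurd (dotProduct_self_eq_zero.mp h.symm) hc
  have hnc : 0 < nc := Real.sqrt_pos.mpr hcc
  have hnc2 : nc ^ 2 = c ⬝ᵥ c := Real.sq_sqrt hcc.le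
  set h : Fin n → ℝ := (s / nc) • c with hdef
  have hch : c ⬝ᵥ h = s * nc := by
    rw [hdef, dotProduct_smul, smul_eq_mul, ← hnc2]
    field_simp
  have hB : MeasurableSet {x : Fin n → ℝ | 0 < c ⬝ᵥ x} :=
    measurableSet_lt measurable_const (measurable_dot c)
  have hsub : Measurable fun x : Fin n → ℝ => x - h :=
    measurable_id.sub measurable_const
  have hpre : {x : Fin n → ℝ | nc * s < c ⬝ᵥ x} =
      (fun x => x - h) ⁻¹' {x | 0 < c ⬝ᵥ x} := by
    ext x
    simp only [Set.mem_setOf_eq, Set.mem_preimage, dotProduct_sub, hch, sub_pos, mul_comm s nc]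
  have hmap : Measure.map (fun x => x - h) γn =
      γn.withDensity (fun x => ENNReal.ofReal (rexp (∑ i, ((-h) i * x i - (-h) i ^ 2 / 2)))) := by
    have heq : (fun x : Fin n → ℝ => x - h) = fun x => x + (-h) := funext fun x => sub_eq_add_neg x h
    rw [heq, hγn, map_add_pi, pi_gauss]
  have hexp : ∀ x : Fin n → ℝ, 0 < c ⬝ᵥ x →
      ∑ i, ((-h) i * x i - (-h) i ^ 2 / 2) ≤ -(s ^ 2) / 2 := by
    intro x hx
    have e1 : ∑ i, (-h) i * x i = -((s / nc) * (c ⬝ᵥ x)) := by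
      simp only [hdef, Pi.neg_apply, Pi.smul_apply, smul_eq_mul, neg_mul, dotProduct,
        Finset.mul_sum, ← Finset.sum_neg_distrib, mul_assoc]
    have e2 : ∑ i, (-h) i ^ 2 / 2 = s ^ 2 / 2 := by
      have step : ∑ i, (-h) i ^ 2 / 2 = (s / nc) ^ 2 * (∑ i, c i * c i) / 2 := by
        rw [Finset.mul_sum, Finset.sum_div]
        refine Finset.sum_congr rfl fun i _ => ?_
        simp only [hdef, Pi.neg_apply, Pi.smul_apply, smul_eq_mul]
        ring
      have hdd : (∑ i, c i * c i) = nc ^ 2 := by rw [hnc2]; rfl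
      rw [step, hdd, div_pow, div_mul_cancel₀ _ (pow_ne_zero 2 hnc.ne')]
    rw [Finset.sum_sub_distrib, e1, e2]
    have : 0 ≤ (s / nc) * (c ⬝ᵥ x) := mul_nonneg (div_nonneg hs hnc.le) hx.le
    linarith
  calc γn {x | nc * s < c ⬝ᵥ x}
      = γn ((fun x => x - h) ⁻¹' {x | 0 < c ⬝ᵥ x}) := by rw [hpre]
    _ = Measure.map (fun x => x - h) γn {x | 0 < c ⬝ᵥ x} := (Measure.map_apply hsub hB).symm
    _ = ∫⁻ x in {x | 0 < c ⬝ᵥ x},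
          ENNReal.ofReal (rexp (∑ i, ((-h) i * x i - (-h) i ^ 2 / 2))) ∂γn := by
        rw [hmap, withDensity_apply _ hB]
    _ ≤ ∫⁻ _ in {x | 0 < c ⬝ᵥ x}, ENNReal.ofReal (rexp (-(s ^ 2) / 2)) ∂γn := by
        refine setLIntegral_mono measurable_const fun x hx => ?_
        exact ENNReal.ofReal_le_ofReal (Real.exp_le_exp.mpr (hexp x hx))
    _ = ENNReal.ofReal (rexp (-(s ^ 2) / 2)) * γn {x | 0 < c ⬝ᵥ x} := by
        rw [setLIntegral_const]


lemma gauss_half {n : ℕ} (c : Fin n → ℝ) :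
    (Measure.pi fun _ : Fin n => gaussianReal 0 1) {x | 0 < c ⬝ᵥ x} ≤ 2⁻¹ := by
  set γn := (Measure.pi fun _ : Fin n => gaussianReal 0 1) with hγn
  have hB : MeasurableSet {x : Fin n → ℝ | 0 < c ⬝ᵥ x} :=
    measurableSet_lt measurable_const (measurable_dot c)
  have hB' : MeasurableSet {x : Fin n → ℝ | c ⬝ᵥ x < 0} :=
    measurableSet_lt (measurable_dot c) measurable_const
  have hsym : γn {x | c ⬝ᵥ x < 0} = γn {x | 0 < c ⬝ᵥ x} := by
    rw [hγn]
    conv_rhs => rw [← map_neg_pi (n := n)]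
    rw [Measure.map_apply measurable_neg hB]
    congr 1
    ext x
    simp [dotProduct_neg]
  have hdisj : Disjoint {x : Fin n → ℝ | 0 < c ⬝ᵥ x} {x | c ⬝ᵥ x < 0} := by
    rw [Set.disjoint_left]
    intro x hx hx'
    simp only [Set.mem_setOf_eq] at hx hx'
    linarith
  have hsum : γn {x | 0 < c ⬝ᵥ x} + γn {x | 0 < c ⬝ᵥ x} ≤ 1 := by
    calc γn {x | 0 < c ⬝ᵥ x} + γn {x | 0 < c ⬝ᵥ x}
        = γn {x | 0 < c ⬝ᵥ x} + γn {x | c ⬝ᵥ x < 0} := by rw [hsym]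
      _ = γn ({x | 0 < c ⬝ᵥ x} ∪ {x | c ⬝ᵥ x < 0}) := (measure_union hdisj hB').symm
      _ ≤ γn Set.univ := measure_mono (Set.subset_univ _)
      _ = 1 := measure_univ
  have h2 : γn {x | 0 < c ⬝ᵥ x} * 2 ≤ 1 := by rwa [mul_two]
  rw [ENNReal.le_inv_iff_mul_le]
  exact h2

lemma gauss_tail {n : ℕ} (c : Fin n → ℝ) {s : ℝ} (hs : 0 ≤ s) :
    (Measure.pi fun _ : Fin n => gaussianReal 0 1) {x | Real.sqrt (c ⬝ᵥ c) * s < |c ⬝ᵥ x|} ≤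
      ENNReal.ofReal (rexp (-(s ^ 2) / 2)) := by
  set γn := (Measure.pi fun _ : Fin n => gaussianReal 0 1) with hγn
  by_cases hc : c = 0
  · subst hc
    have : {x : Fin n → ℝ | Real.sqrt ((0 : Fin n → ℝ) ⬝ᵥ (0 : Fin n → ℝ)) * s
        < |(0 : Fin n → ℝ) ⬝ᵥ x|} = ∅ := by
      ext x
      simp [zero_dotProduct]
    rw [this]
    simp
  · have hnegc : (-c : Fin n → ℝ) ≠ 0 := neg_ne_zero.mpr hc
    have hcc : Real.sqrt ((-c) ⬝ᵥ (-c)) = Real.sqrt (c ⬝ᵥ c) := by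
      rw [neg_dotProduct, dotProduct_neg, neg_neg]
    have hsub : {x : Fin n → ℝ | Real.sqrt (c ⬝ᵥ c) * s < |c ⬝ᵥ x|} ⊆
        {x | Real.sqrt (c ⬝ᵥ c) * s < c ⬝ᵥ x} ∪
          {x | Real.sqrt ((-c) ⬝ᵥ (-c)) * s < (-c) ⬝ᵥ x} := by
      intro x hx
      rcases lt_abs.mp (Set.mem_setOf_eq ▸ hx) with h | h
      · exact Or.inl h
      · refine Or.inr ?_
        rw [Set.mem_setOf_eq, hcc, neg_dotProduct]
        exact h
    calc γn {x | Real.sqrt (c ⬝ᵥ c) * s < |c ⬝ᵥ x|}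
        ≤ γn ({x | Real.sqrt (c ⬝ᵥ c) * s < c ⬝ᵥ x} ∪
            {x | Real.sqrt ((-c) ⬝ᵥ (-c)) * s < (-c) ⬝ᵥ x}) := measure_mono hsub
      _ ≤ γn {x | Real.sqrt (c ⬝ᵥ c) * s < c ⬝ᵥ x} +
            γn {x | Real.sqrt ((-c) ⬝ᵥ (-c)) * s < (-c) ⬝ᵥ x} := measure_union_le _ _
      _ ≤ ENNReal.ofReal (rexp (-(s ^ 2) / 2)) * γn {x | 0 < c ⬝ᵥ x} +
            ENNReal.ofReal (rexp (-(s ^ 2) / 2)) * γn {x | 0 < (-c) ⬝ᵥ x} :=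
          add_le_add (gauss_tail_one_sided c hc hs) (gauss_tail_one_sided (-c) hnegc hs)
      _ ≤ ENNReal.ofReal (rexp (-(s ^ 2) / 2)) * 2⁻¹ +
            ENNReal.ofReal (rexp (-(s ^ 2) / 2)) * 2⁻¹ := by
          gcongr
          · exact gauss_half c
          · exact gauss_half (-c)
      _ = ENNReal.ofReal (rexp (-(s ^ 2) / 2)) := by
          rw [← mul_add, ENNReal.inv_two_add_inv_two, mul_one]


/-- Second claim of Lemma 6: the event `E^μ̃(t)` holds with probability at least `1 - 1/T²`.
If `μ̃ = μ̂ + v B^{-1/2} ξ` with `ξ` standard Gaussian (so `μ̃ ∼ N(μ̂, v²B⁻¹)`), then with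
probability at least `1 - 1/T²`, for all arms `i`,
`|b_iᵀμ̃ − b_iᵀμ̂| ≤ v ‖b_i‖_{B⁻¹} √(4 ln(TN))`. -/
theorem event_E_mutilde
    {Ω : Type*} [MeasurableSpace Ω] (P : Measure Ω) [IsProbabilityMeasure P]
    (N T : ℕ) (hT : 1 ≤ T) (hN : 1 ≤ N) (hTN : 2 ≤ T * N)
    (B : Matrix (Fin N) (Fin N) ℝ) (hB : B.PosDef)
    (μhat : Fin N → ℝ) (v : ℝ) (hv : 0 < v) (b : Fin N → (Fin N → ℝ))
    (ξ : Ω → (Fin N → ℝ)) (hξm : Measurable ξ)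
    (hξ : P.map ξ = Measure.pi (fun _ : Fin N => gaussianReal 0 1))
    (μtil : Ω → (Fin N → ℝ))
    (hμtil : ∀ ω, μtil ω = μhat + v • ((hB.1.eigenvectorUnitary : Matrix (Fin N) (Fin N) ℝ) *
      diagonal ((↑) ∘ (√·) ∘ hB.1.eigenvalues : Fin N → ℝ) *
      (star hB.1.eigenvectorUnitary : Matrix (Fin N) (Fin N) ℝ))⁻¹.mulVec (ξ ω)) :
    ENNReal.ofReal (1 - 1 / T ^ 2) ≤
      P {ω | ∀ i : Fin N,
        |b i ⬝ᵥ μtil ω - b i ⬝ᵥ μhat| ≤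
          v * Real.sqrt (b i ⬝ᵥ B⁻¹.mulVec (b i)) * Real.sqrt (4 * Real.log (T * N))} := by
  classical
  set S := ((hB.1.eigenvectorUnitary : Matrix (Fin N) (Fin N) ℝ) *
      diagonal ((↑) ∘ (√·) ∘ hB.1.eigenvalues : Fin N → ℝ) *
      (star hB.1.eigenvectorUnitary : Matrix (Fin N) (Fin N) ℝ)) with hS
  set A := S⁻¹ with hA
  have hsqrtT : Sᵀ = S := by
    have h := isHermitian_mul_mul_conjTranspose (hB.1.eigenvectorUnitary : Matrix (Fin N) (Fin N) ℝ)
      (isHermitian_diagonal ((↑) ∘ (√·) ∘ hB.1.eigenvalues : Fin N → ℝ))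
    rw [IsHermitian, conjTranspose_eq_transpose_of_trivial, ← star_eq_conjTranspose,
      ← Unitary.coe_star] at h
    exact h
  have hSS : S * S = B := by
    conv_rhs => rw [hB.1.spectral_theorem, Unitary.conjStarAlgAut_apply]
    rw [hS]
    simp only [Matrix.mul_assoc]
    rw [← Matrix.mul_assoc (star (hB.1.eigenvectorUnitary : Matrix (Fin N) (Fin N) ℝ)),
      Unitary.star_mul_self_of_mem hB.1.eigenvectorUnitary.2, Matrix.one_mul,
      ← Matrix.mul_assoc (diagonal _), diagonal_mul_diagonal]
    congr 3
    funext i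
    simp [Real.mul_self_sqrt (hB.eigenvalues_pos i).le]
  have hAsymm : Aᵀ = A := by
    rw [hA, Matrix.transpose_nonsing_inv, hsqrtT]
  have hAA : A * A = B⁻¹ := by
    rw [hA, ← Matrix.mul_inv_rev, hSS]
  set c : Fin N → Fin N → ℝ := fun i => A.mulVec (b i) with hc
  have hvm : ∀ w : Fin N → ℝ, w ᵥ* A = A *ᵥ w := by
    intro w
    rw [← hAsymm, vecMul_transpose, hAsymm]
  have hcc : ∀ i, c i ⬝ᵥ c i = b i ⬝ᵥ B⁻¹.mulVec (b i) := by
    intro i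
    rw [hc]
    rw [dotProduct_mulVec, hvm, mulVec_mulVec, hAA, dotProduct_comm]
  have hdiff : ∀ ω (i : Fin N), b i ⬝ᵥ μtil ω - b i ⬝ᵥ μhat = v * (c i ⬝ᵥ ξ ω) := by
    intro ω i
    rw [hμtil ω, dotProduct_add, dotProduct_smul, smul_eq_mul, dotProduct_mulVec, hvm]
    ring_nf
    rfl
  set s := Real.sqrt (4 * Real.log (T * N)) with hsdef
  have hs : 0 ≤ s := Real.sqrt_nonneg _
  have hTN1 : (1 : ℝ) ≤ (T : ℝ) * N := by
    have : (2 : ℝ) ≤ ((T * N : ℕ) : ℝ) := by exact_mod_cast hTN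
    push_cast at this
    linarith
  have hTNpos : (0 : ℝ) < (T : ℝ) * N := lt_of_lt_of_le one_pos hTN1
  have hlog : 0 ≤ Real.log ((T : ℝ) * N) := Real.log_nonneg hTN1
  have hsq : s ^ 2 = 4 * Real.log ((T : ℝ) * N) := Real.sq_sqrt (by linarith)
  have hexp : rexp (-(s ^ 2) / 2) = ((((T : ℝ) * N) ^ 2)⁻¹) := by
    rw [hsq]
    have h4 : -(4 * Real.log ((T : ℝ) * N)) / 2 = -(Real.log (((T : ℝ) * N) ^ 2)) := by
      rw [Real.log_pow]
      push_cast
      ring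
    rw [h4, Real.exp_neg, Real.exp_log (by positivity)]
  set γN := Measure.pi (fun _ : Fin N => gaussianReal 0 1) with hγN
  set S : Set (Fin N → ℝ) :=
    {x | ∀ i, |c i ⬝ᵥ x| ≤ Real.sqrt (c i ⬝ᵥ c i) * s} with hSdef
  have hSm : MeasurableSet S := by
    have : S = ⋂ i, {x | |c i ⬝ᵥ x| ≤ Real.sqrt (c i ⬝ᵥ c i) * s} := by
      ext x; simp [hSdef, Set.mem_iInter]
    rw [this]
    exact MeasurableSet.iInter fun i =>
      measurableSet_le (measurable_dot (c i)).abs measurable_const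
  have hEvent : {ω | ∀ i : Fin N,
      |b i ⬝ᵥ μtil ω - b i ⬝ᵥ μhat| ≤
        v * Real.sqrt (b i ⬝ᵥ B⁻¹.mulVec (b i)) * Real.sqrt (4 * Real.log (T * N))}
      = ξ ⁻¹' S := by
    ext ω
    simp only [Set.mem_setOf_eq, Set.mem_preimage, hSdef]
    refine forall_congr' fun i => ?_
    rw [hdiff ω i, abs_mul, abs_of_pos hv, ← hcc i, ← hsdef, mul_assoc]
    constructor
    · intro hle
      exact le_of_mul_le_mul_left hle hv
    · intro hle
      exact mul_le_mul_of_nonneg_left hle hv.le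
  have hkey : ∀ i : Fin N, γN {x | Real.sqrt (c i ⬝ᵥ c i) * s < |c i ⬝ᵥ x|} ≤
      ENNReal.ofReal ((((T : ℝ) * N) ^ 2)⁻¹) := by
    intro i
    have := gauss_tail (c i) hs
    rwa [hexp] at this
  have hcomplset : Sᶜ = ⋃ i, {x | Real.sqrt (c i ⬝ᵥ c i) * s < |c i ⬝ᵥ x|} := by
    ext x
    simp [hSdef, not_forall, not_le]
  have hcompl : γN Sᶜ ≤ ENNReal.ofReal (1 / (T : ℝ) ^ 2) := by
    calc γN Sᶜ ≤ ∑ i : Fin N, γN {x | Real.sqrt (c i ⬝ᵥ c i) * s < |c i ⬝ᵥ x|} := by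
          rw [hcomplset]
          exact measure_iUnion_fintype_le _ _
      _ ≤ ∑ _i : Fin N, ENNReal.ofReal ((((T : ℝ) * N) ^ 2)⁻¹) :=
          Finset.sum_le_sum fun i _ => hkey i
      _ = (N : ℝ≥0∞) * ENNReal.ofReal ((((T : ℝ) * N) ^ 2)⁻¹) := by
          rw [Finset.sum_const, Finset.card_univ, Fintype.card_fin, nsmul_eq_mul]
      _ = ENNReal.ofReal ((N : ℝ) * (((T : ℝ) * N) ^ 2)⁻¹) := by
          rw [← ENNReal.ofReal_natCast N, ← ENNReal.ofReal_mul (by positivity)]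
      _ ≤ ENNReal.ofReal (1 / (T : ℝ) ^ 2) := by
          apply ENNReal.ofReal_le_ofReal
          have hTpos : (0 : ℝ) < (T : ℝ) := by exact_mod_cast hT
          have hNpos : (0 : ℝ) < (N : ℝ) := by exact_mod_cast hN
          have hN1 : (1 : ℝ) ≤ (N : ℝ) := by exact_mod_cast hN
          have heq : (N : ℝ) * (((T : ℝ) * N) ^ 2)⁻¹ = ((T : ℝ) ^ 2 * N)⁻¹ := by
            rw [mul_pow]
            field_simp
          rw [heq, one_div]
          apply inv_anti₀ (by positivity)
          nlinarith
  have hPS : P (ξ ⁻¹' S) = γN S := by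
    rw [← hξ, Measure.map_apply hξm hSm]
  rw [hEvent, hPS]
  have hadd : γN S + γN Sᶜ = 1 := by
    rw [measure_add_measure_compl hSm, measure_univ]
  have hone : (1 : ℝ≥0∞) ≤ γN S + ENNReal.ofReal (1 / (T : ℝ) ^ 2) := by
    rw [← hadd]
    exact add_le_add_right hcompl _
  have h1 : ENNReal.ofReal (1 - 1 / (T : ℝ) ^ 2) ≤ 1 - ENNReal.ofReal (1 / (T : ℝ) ^ 2) := by
    rw [ENNReal.ofReal_sub _ (by positivity), ENNReal.ofReal_one]
  exact h1.trans (tsub_le_iff_right.mpr hone)
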